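/- Let Λ ⊂ ℝ^n be a Delone set with finite local complexity and let ε > 0. Then there exist finitely many vectors z_1, …, z_N ∈ ℝ^n such that the translates Λ + z_1, …, Λ + z_N are pairwise disjoint and the set Λ̄ = ⋃_{i=1}^N (Λ + z_i) has hole ρ(Λ̄) < ε. -/

import Mathlib

open MeasureTheory Filter Topology Metric
open scoped ENNReal RealInnerProductSpace

noncomputable section

abbrev Ed (d : ℕ) := EuclideanSpace ℝ (Fin d)
abbrev TF (d : ℕ) := Ed d × Ed d

def UniformlyDiscrete {V : Type*} [NormedAddCommGroup V] (Λ : Set V) : Prop :=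
  ∃ r > 0, ∀ x ∈ Λ, ∀ y ∈ Λ, x ≠ y → r ≤ dist x y

def hole {V : Type*} [NormedAddCommGroup V] (Λ : Set V) : ℝ≥0∞ :=
  ⨆ z : V, ⨅ l : Λ, edist z (l : V)

def RelativelyDense {V : Type*} [NormedAddCommGroup V] (Λ : Set V) : Prop := hole Λ < ⊤

def IsDelone {V : Type*} [NormedAddCommGroup V] (Λ : Set V) : Prop :=
  UniformlyDiscrete Λ ∧ RelativelyDense Λ

def patchAt {V : Type*} [NormedAddCommGroup V] (Λ : Set V) (r : ℝ) (l : V) : Set V :=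
  (fun y => y - l) '' (Λ ∩ Metric.ball l r)

def FLC {V : Type*} [NormedAddCommGroup V] (Λ : Set V) : Prop :=
  ∀ r > 0, {P : Set V | ∃ l ∈ Λ, P = patchAt Λ r l}.Finite

def hull {V : Type*} [NormedAddCommGroup V] (Λ : Set V) : Set (Set V) :=
  {T | IsDelone T ∧ ∀ R > 0, ∀ ε > 0, ∃ z w : V, ‖w‖ < ε ∧
      ((fun y => y - z - w) '' Λ) ∩ Metric.ball 0 R = T ∩ Metric.ball 0 R}

def patchCount {V : Type*} [NormedAddCommGroup V] (Λ P A : Set V) : ℕ :=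
  {z : V | (fun p => p + z) '' P ⊆ Λ ∩ A}.ncard

def UCF {d : ℕ} (Λ : Set (TF d)) : Prop :=
  ∀ r > 0, ∀ l ∈ Λ, ∃ c : ℝ, ∀ ε > 0, ∃ R₀ : ℝ, ∀ R ≥ R₀, ∀ w : TF d,
    |(patchCount Λ (patchAt Λ r l) (Metric.ball w R) : ℝ) /
      (volume (Metric.ball w R)).toReal - c| < ε

def IsQuasicrystal {d : ℕ} (Λ : Set (TF d)) : Prop :=
  IsDelone Λ ∧ FLC Λ ∧ UCF Λ

def tfShift {d : ℕ} (z : TF d) (f : Ed d → ℂ) : Ed d → ℂ :=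
  fun t => Complex.exp (2 * Real.pi * Complex.I * ((inner ℝ z.2 t : ℝ) : ℂ)) * f (t - z.1)

def L2inner {d : ℕ} (f g : Ed d → ℂ) : ℂ := ∫ t, f t * (starRingEnd ℂ) (g t)

def gaborCoeffSq {d N : ℕ} (g : Fin N → Ed d → ℂ) (Λ : Set (TF d)) (f : Ed d → ℂ) : ℝ≥0∞ :=
  ∑' (i : Fin N) (z : Λ), (‖L2inner f (tfShift (z : TF d) (g i))‖₊ : ℝ≥0∞) ^ 2

def IsFrameWith {d N : ℕ} (g : Fin N → Ed d → ℂ) (Λ : Set (TF d)) (A B : ℝ) : Prop :=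
  ∀ f : Ed d → ℂ, MemLp f 2 volume →
    ENNReal.ofReal A * (∫⁻ t, (‖f t‖₊ : ℝ≥0∞) ^ 2) ≤ gaborCoeffSq g Λ f ∧
    gaborCoeffSq g Λ f ≤ ENNReal.ofReal B * (∫⁻ t, (‖f t‖₊ : ℝ≥0∞) ^ 2)

def IsGaborFrame {d N : ℕ} (g : Fin N → Ed d → ℂ) (Λ : Set (TF d)) : Prop :=
  ∃ A B : ℝ, 0 < A ∧ 0 < B ∧ IsFrameWith g Λ A B

def gaussW (d : ℕ) : Ed d → ℂ :=
  fun t => (((2 : ℝ) ^ ((d : ℝ) / 4) : ℝ) : ℂ) * Complex.exp (-((Real.pi * ‖t‖ ^ 2 : ℝ) : ℂ))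

def stft {d : ℕ} (f : Ed d → ℂ) (z : TF d) : ℂ :=
  ∫ t, f t * gaussW d (t - z.1) * Complex.exp (-(2 * Real.pi * Complex.I) * ((inner ℝ z.2 t : ℝ) : ℂ))

def M1norm {d : ℕ} (f : Ed d → ℂ) : ℝ := ∫ z : TF d, ‖stft f z‖

def MemM1 {d : ℕ} (f : Ed d → ℂ) : Prop :=
  MemLp f 2 volume ∧ Integrable (fun z : TF d => ‖stft f z‖)

def frameOp {d N : ℕ} (g : Fin N → Ed d → ℂ) (T : Set (TF d)) (f : Ed d → ℂ) : Ed d → ℂ :=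
  fun t => ∑' (i : Fin N) (z : T), L2inner f (tfShift (z : TF d) (g i)) * tfShift (z : TF d) (g i) t

def IsM1FrameWith {d N : ℕ} (g : Fin N → Ed d → ℂ) (Λ : Set (TF d)) (A B : ℝ) : Prop :=
  ∀ f : Ed d → ℂ, MemM1 f →
    Real.sqrt A * M1norm f ≤ M1norm (frameOp g Λ f) ∧
    M1norm (frameOp g Λ f) ≤ Real.sqrt B * M1norm f

def IsM1Frame {d N : ℕ} (g : Fin N → Ed d → ℂ) (Λ : Set (TF d)) : Prop :=
  ∃ A B : ℝ, 0 < A ∧ 0 < B ∧ IsM1FrameWith g Λ A B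

def unitCube {n : ℕ} (z : Ed n) : Set (Ed n) := {y | ∀ i, |y i - z i| ≤ 1 / 2}

def relConst {n : ℕ} (Λ : Set (Ed n)) : ℕ∞ := ⨆ z : Ed n, (Λ ∩ unitCube z).encard

def unitCubeTF {d : ℕ} (z : TF d) : Set (TF d) :=
  {y | (∀ i, |y.1 i - z.1 i| ≤ 1 / 2) ∧ ∀ i, |y.2 i - z.2 i| ≤ 1 / 2}

def RelSepTF {d : ℕ} (Λ : Set (TF d)) : Prop :=
  ∃ C : ℕ, ∀ z : TF d, (Λ ∩ unitCubeTF z).encard ≤ C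

def cubeTF (d : ℕ) (k : ℝ) : Set (TF d) :=
  {z | (∀ i, |z.1 i| ≤ k / 2) ∧ ∀ i, |z.2 i| ≤ k / 2}


lemma disjoint_translates_small_hole_aux {n : ℕ} (hn : 0 < n) (D : Set (Ed n))
    (hD : D.Countable) (δ : ℝ) (hδ : 0 < δ) :
    ∀ (m : ℕ) (v : Fin m → Ed n), ∃ w : Fin m → Ed n,
      (∀ i, ‖w i‖ < δ) ∧ ∀ i j, i ≠ j → v i + w i - (v j + w j) ∉ D := by
  haveI : Nonempty (Fin n) := ⟨⟨0, hn⟩⟩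
  intro m
  induction m with
  | zero => exact fun v => ⟨fun i => 0, fun i => i.elim0, fun i => i.elim0⟩
  | succ m ih =>
    intro v
    obtain ⟨w, hw1, hw2⟩ := ih (v ∘ Fin.castSucc)
    set bad : Set (Ed n) :=
      (⋃ j : Fin m, (fun d => v (Fin.castSucc j) + w j - v (Fin.last m) + d) '' D) ∪
      (⋃ j : Fin m, (fun d => v (Fin.castSucc j) + w j - v (Fin.last m) - d) '' D) with hbad_def
    have hbad : bad.Countable :=
      ((Set.countable_iUnion fun j => hD.image _).union
        (Set.countable_iUnion fun j => hD.image _))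
    have hne : (Metric.ball (0 : Ed n) δ \ bad).Nonempty := by
      by_contra h
      rw [Set.not_nonempty_iff_eq_empty, Set.diff_eq_empty] at h
      have h1 : volume (Metric.ball (0 : Ed n) δ) ≤ volume bad := measure_mono h
      rw [hbad.measure_zero] at h1
      exact absurd h1 (measure_ball_pos volume (0 : Ed n) hδ).not_ge
    obtain ⟨u, hu, hunb⟩ := hne
    refine ⟨Fin.snoc w u, ?_, ?_⟩
    · intro i
      induction i using Fin.lastCases with
      | last => simpa using hu
      | cast i => simpa using hw1 i
    · intro i j hij
      induction i using Fin.lastCases with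
      | last =>
        induction j using Fin.lastCases with
        | last => exact absurd rfl hij
        | cast j =>
          simp only [Fin.snoc_last, Fin.snoc_castSucc]
          intro hmem
          apply hunb
          refine Or.inl (Set.mem_iUnion.2 ⟨j, ⟨_, hmem, ?_⟩⟩)
          module
      | cast i =>
        induction j using Fin.lastCases with
        | last =>
          simp only [Fin.snoc_last, Fin.snoc_castSucc]
          intro hmem
          apply hunb
          refine Or.inr (Set.mem_iUnion.2 ⟨i, ⟨_, hmem, ?_⟩⟩)
          module
        | cast j =>
          simp only [Fin.snoc_castSucc]
          exact hw2 i j (fun h => hij (by rw [h]))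

/-- an FLC Delone set has finitely many pairwise disjoint translates whose
union has hole smaller than any prescribed `ε > 0`. -/
theorem disjoint_translates_small_hole {n : ℕ} (Λ : Set (Ed n))
    (hDel : IsDelone Λ) (hFLC : FLC Λ) (ε : ℝ) (hε : 0 < ε) :
    ∃ (N : ℕ) (z : Fin N → Ed n),
      (∀ i j : Fin N, i ≠ j →
        Disjoint ((fun y => y + z i) '' Λ) ((fun y => y + z j) '' Λ)) ∧
      hole (⋃ i : Fin N, (fun y => y + z i) '' Λ) < ENNReal.ofReal ε := by
  classical
  obtain ⟨⟨r, hr, hsep⟩, hrd⟩ := hDel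
  have hΛne : Λ.Nonempty := by
    by_contra h
    rw [Set.not_nonempty_iff_eq_empty] at h
    subst h
    have h2 : hole (∅ : Set (Ed n)) = ⊤ := by
      refine le_antisymm le_top (le_iSup_of_le 0 ?_)
      simp
    rw [RelativelyDense, h2] at hrd
    exact lt_irrefl _ hrd
  rcases Nat.eq_zero_or_pos n with hn | hn
  · subst hn
    refine ⟨1, fun _ => 0, fun i j hij => absurd (Subsingleton.elim i j) hij, ?_⟩
    obtain ⟨l, hl⟩ := hΛne
    have hmem : l ∈ ⋃ i : Fin 1, (fun y => y + (0 : Ed 0)) '' Λ :=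
      Set.mem_iUnion.2 ⟨0, ⟨l, hl, by simp⟩⟩
    have h0 : hole (⋃ i : Fin 1, (fun y => y + (0 : Ed 0)) '' Λ) = 0 := by
      refine le_antisymm (iSup_le fun z => ?_) zero_le
      refine iInf_le_of_le ⟨l, hmem⟩ ?_
      simp [Subsingleton.elim z l]
    rw [h0]
    exact ENNReal.ofReal_pos.2 hε
  -- main case
  haveI : Nonempty (Fin n) := ⟨⟨0, hn⟩⟩
  -- Λ is countable
  have hΛc : Λ.Countable := by
    refine Set.PairwiseDisjoint.countable_of_isOpen
      (s := fun x => Metric.ball x (r / 2)) (a := Λ) ?_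
      (fun x _ => Metric.isOpen_ball) (fun x _ => Metric.nonempty_ball.2 (by linarith))
    intro x hx y hy hxy
    exact Metric.ball_disjoint_ball (by linarith [hsep x hx y hy hxy])
  set D : Set (Ed n) := (fun p : Ed n × Ed n => p.1 - p.2) '' (Λ ×ˢ Λ) with hD_def
  have hDc : D.Countable := (hΛc.prod hΛc).image _
  have hDmem : ∀ a ∈ Λ, ∀ b ∈ Λ, a - b ∈ D := fun a ha b hb => ⟨(a, b), ⟨ha, hb⟩, rfl⟩
  -- radius of relative density
  set R : ℝ := (hole Λ).toReal + 1 with hR_def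
  have hRpos : 0 < R := by positivity
  have hcover : ∀ x : Ed n, ∃ l ∈ Λ, dist x l < R := by
    intro x
    have h1 : (⨅ l : Λ, edist x (l : Ed n)) < ENNReal.ofReal R := by
      have hhole : hole Λ < ENNReal.ofReal R := by
        rw [ENNReal.lt_ofReal_iff_toReal_lt hrd.ne]
        exact lt_add_one _
      exact lt_of_le_of_lt (le_iSup (fun z => ⨅ l : Λ, edist z (l : Ed n)) x) hhole
    haveI : Nonempty Λ := hΛne.to_subtype
    obtain ⟨l, hl⟩ := exists_lt_of_ciInf_lt h1
    exact ⟨(l : Ed n), l.2, edist_lt_ofReal.1 hl⟩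
  -- finite net of the closed ball of radius R
  obtain ⟨t, hts, htfin, htcov⟩ :=
    (isCompact_closedBall (0 : Ed n) R).finite_cover_balls (show (0:ℝ) < ε / 4 by linarith)
  haveI := htfin.fintype
  set N := htfin.toFinset.card with hN_def
  set e : htfin.toFinset ≃ Fin N := htfin.toFinset.equivFin with he_def
  set v : Fin N → Ed n := fun i => ((e.symm i : htfin.toFinset) : Ed n) with hv_def
  obtain ⟨w, hw1, hw2⟩ := disjoint_translates_small_hole_aux hn D hDc (ε / 4) (by linarith) N v
  refine ⟨N, fun i => v i + w i, ?_, ?_⟩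
  · intro i j hij
    rw [Set.disjoint_left]
    rintro x ⟨a, ha, rfl⟩ ⟨b, hb, hab⟩
    have : v i + w i - (v j + w j) = b - a := by
      have := hab
      simp only at this
      linear_combination (norm := abel_nf) - this
    exact hw2 i j hij (this ▸ hDmem b hb a ha)
  · refine lt_of_le_of_lt (iSup_le fun x => ?_)
      (ENNReal.ofReal_lt_ofReal_iff hε |>.2 (by linarith : ε / 2 < ε))
    obtain ⟨l, hl, hdl⟩ := hcover x
    have hxl : x - l ∈ Metric.closedBall (0 : Ed n) R := by
      simpa [Metric.mem_closedBall, dist_eq_norm] using (dist_eq_norm x l ▸ hdl.le)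
    obtain ⟨c, hc, hxc⟩ := Set.mem_iUnion₂.1 (htcov hxl)
    set i : Fin N := e ⟨c, htfin.mem_toFinset.2 hc⟩ with hi_def
    have hvi : v i = c := by simp [hv_def, hi_def]
    have hmem : l + (v i + w i) ∈ ⋃ k : Fin N, (fun y => y + (v k + w k)) '' Λ :=
      Set.mem_iUnion.2 ⟨i, ⟨l, hl, rfl⟩⟩
    refine iInf_le_of_le ⟨_, hmem⟩ ?_
    have hd : dist x (l + (v i + w i)) ≤ ε / 2 := by
      have h1 : dist x (l + (v i + w i)) ≤ ‖x - l - v i‖ + ‖w i‖ := by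
        rw [dist_eq_norm]
        have h3 : x - (l + (v i + w i)) = (x - l - v i) - w i := by abel
        rw [h3]
        exact norm_sub_le _ _
      have h2 : ‖x - l - v i‖ < ε / 4 := by
        have := Metric.mem_ball.1 hxc
        rw [dist_eq_norm, hvi] at *
        simpa [hvi] using this
      linarith [hw1 i]
    exact (edist_le_ofReal (by linarith)).2 hd


end
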